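/- Define the differential operator τ on smooth functions φ : {t > 0} × ℝ → ℝ by τ(φ) = t²·∂²φ/∂t² + (1−n)·t·∂φ/∂t + t²·∂²φ/∂x² with n = 1 (the Laplace–Beltrami operator of the hyperbolic plane ℝH² in these coordinates, with n = 1). Then the function φ(t,x) = x⁶·log(t) − 15·x⁴·t²·(log(t) − 2) + 5·x²·t⁴·(3·log(t) − 8) − (t⁶/15)·(15·log(t) − 46) satisfies τ(τ(φ)) = 0 but τ(φ) ≠ 0; that is, φ is proper biharmonic on ℝH². -/

import Mathlib

/-- The Laplace–Beltrami operator of the real hyperbolic plane `ℝH²` in half-space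
coordinates `(t, x)`, `t > 0`, with `n = 1`:
`τ(φ) = t²·φ_tt + (1 − n)·t·φ_t + t²·φ_xx`. -/
noncomputable def tauRH2 (φ : ℝ → ℝ → ℝ) : ℝ → ℝ → ℝ := fun t x =>
  t ^ 2 * deriv (deriv (fun s => φ s x)) t
    + (1 - (1 : ℝ)) * t * deriv (fun s => φ s x) t
    + t ^ 2 * deriv (deriv (fun y => φ t y)) x

noncomputable def Phi : ℝ → ℝ → ℝ := fun t x =>
  x ^ 6 * Real.log t - 15 * x ^ 4 * t ^ 2 * (Real.log t - 2)
    + 5 * x ^ 2 * t ^ 4 * (3 * Real.log t - 8)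
    - t ^ 6 / 15 * (15 * Real.log t - 46)

noncomputable def Psi : ℝ → ℝ → ℝ := fun t x =>
  -x ^ 6 + 15 * x ^ 4 * t ^ 2 - 15 * x ^ 2 * t ^ 4 + t ^ 6

/-- first t-derivative of Phi -/
noncomputable def A : ℝ → ℝ → ℝ := fun t x =>
  x ^ 6 * t⁻¹ - 30 * x ^ 4 * (t * Real.log t) + 45 * x ^ 4 * t
    + 60 * x ^ 2 * (t ^ 3 * Real.log t) - 145 * x ^ 2 * t ^ 3
    - 6 * (t ^ 5 * Real.log t) + 87 / 5 * t ^ 5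

/-- second t-derivative of Phi -/
noncomputable def B : ℝ → ℝ → ℝ := fun t x =>
  -(x ^ 6 * (t ^ 2)⁻¹) - 30 * x ^ 4 * Real.log t + 15 * x ^ 4
    + 180 * x ^ 2 * (t ^ 2 * Real.log t) - 375 * x ^ 2 * t ^ 2
    - 30 * (t ^ 4 * Real.log t) + 81 * t ^ 4

lemma hA {t : ℝ} (ht : t ≠ 0) (x : ℝ) :
    HasDerivAt (fun s => Phi s x) (A t x) t := by
  have hl := Real.hasDerivAt_log ht
  have h1 : HasDerivAt (fun s : ℝ => x ^ 6 * Real.log s) (x ^ 6 * t⁻¹) t :=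
    hl.const_mul _
  have h2 := ((hasDerivAt_pow 2 t).const_mul (15 * x ^ 4)).mul (hl.sub_const 2)
  have h3 := ((hasDerivAt_pow 4 t).const_mul (5 * x ^ 2)).mul
    ((hl.const_mul 3).sub_const 8)
  have h4 := ((hasDerivAt_pow 6 t).div_const 15).mul
    ((hl.const_mul 15).sub_const 46)
  have h := ((h1.sub h2).add h3).sub h4
  refine h.congr_deriv ?_
  simp only [A]
  field_simp
  ring

lemma hB {t : ℝ} (ht : t ≠ 0) (x : ℝ) :
    HasDerivAt (fun s => A s x) (B t x) t := by
  have hl := Real.hasDerivAt_log ht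
  have h1 : HasDerivAt (fun s : ℝ => x ^ 6 * s⁻¹) (x ^ 6 * (-(t ^ 2)⁻¹)) t :=
    (hasDerivAt_inv ht).const_mul _
  have h2 := ((hasDerivAt_id t).mul hl).const_mul (30 * x ^ 4)
  have h3 : HasDerivAt (fun s : ℝ => 45 * x ^ 4 * s) (45 * x ^ 4) t := by
    simpa using (hasDerivAt_id t).const_mul (45 * x ^ 4)
  have h4 := ((hasDerivAt_pow 3 t).mul hl).const_mul (60 * x ^ 2)
  have h5 := (hasDerivAt_pow 3 t).const_mul (145 * x ^ 2)
  have h6 := ((hasDerivAt_pow 5 t).mul hl).const_mul (6 : ℝ)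
  have h7 := (hasDerivAt_pow 5 t).const_mul ((87 : ℝ) / 5)
  have h := (((((h1.sub h2).add h3).add h4).sub h5).sub h6).add h7
  refine h.congr_deriv ?_
  simp only [B, id_eq]
  field_simp
  ring

lemma derivA {t : ℝ} (ht : t ≠ 0) (x : ℝ) :
    deriv (fun s => Phi s x) t = A t x := (hA ht x).deriv

lemma derivB {t : ℝ} (ht : t ≠ 0) (x : ℝ) :
    deriv (deriv (fun s => Phi s x)) t = B t x := by
  have hev : deriv (fun s => Phi s x) =ᶠ[nhds t] fun s => A s x := by
    filter_upwards [eventually_ne_nhds ht] with s hs using derivA hs x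
  rw [hev.deriv_eq]
  exact (hB ht x).deriv

/-- x-derivatives of Phi -/
lemma hC (t x : ℝ) :
    HasDerivAt (fun y => Phi t y)
      (6 * x ^ 5 * Real.log t - 15 * (4 * x ^ 3) * t ^ 2 * (Real.log t - 2)
        + 5 * (2 * x) * t ^ 4 * (3 * Real.log t - 8)) x := by
  have h1 := (hasDerivAt_pow 6 x).mul_const (Real.log t)
  have h2 := ((hasDerivAt_pow 4 x).const_mul 15).mul_const (t ^ 2 * (Real.log t - 2))
  have h3 := ((hasDerivAt_pow 2 x).const_mul 5).mul_const (t ^ 4 * (3 * Real.log t - 8))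
  have h := ((h1.sub h2).add h3).sub_const (t ^ 6 / 15 * (15 * Real.log t - 46))
  have hfun : (fun y => Phi t y) = fun y =>
      y ^ 6 * Real.log t - 15 * y ^ 4 * (t ^ 2 * (Real.log t - 2))
        + 5 * y ^ 2 * (t ^ 4 * (3 * Real.log t - 8))
        - t ^ 6 / 15 * (15 * Real.log t - 46) := by
    funext y; simp only [Phi]; ring
  rw [hfun]
  refine h.congr_deriv ?_
  push_cast; ring

lemma hD (t x : ℝ) :
    HasDerivAt (fun y => 6 * y ^ 5 * Real.log t
        - 15 * (4 * y ^ 3) * t ^ 2 * (Real.log t - 2)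
        + 5 * (2 * y) * t ^ 4 * (3 * Real.log t - 8))
      (30 * x ^ 4 * Real.log t - 180 * x ^ 2 * t ^ 2 * (Real.log t - 2)
        + 10 * t ^ 4 * (3 * Real.log t - 8)) x := by
  have h1 := ((hasDerivAt_pow 5 x).const_mul 6).mul_const (Real.log t)
  have h2 := ((hasDerivAt_pow 3 x).const_mul (15 * 4)).mul_const
    (t ^ 2 * (Real.log t - 2))
  have h3 := ((hasDerivAt_id x).const_mul (5 * 2)).mul_const
    (t ^ 4 * (3 * Real.log t - 8))
  have h := (h1.sub h2).add h3
  have hfun : (fun y : ℝ => 6 * y ^ 5 * Real.log t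
        - 15 * (4 * y ^ 3) * t ^ 2 * (Real.log t - 2)
        + 5 * (2 * y) * t ^ 4 * (3 * Real.log t - 8)) = fun y =>
      6 * y ^ 5 * Real.log t - 15 * 4 * y ^ 3 * (t ^ 2 * (Real.log t - 2))
        + 5 * 2 * id y * (t ^ 4 * (3 * Real.log t - 8)) := by
    funext y; simp only [id_eq]; ring
  rw [hfun]
  refine h.congr_deriv ?_
  push_cast; ring

lemma derivD (t x : ℝ) :
    deriv (deriv (fun y => Phi t y)) x
      = 30 * x ^ 4 * Real.log t - 180 * x ^ 2 * t ^ 2 * (Real.log t - 2)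
        + 10 * t ^ 4 * (3 * Real.log t - 8) := by
  have hev : deriv (fun y => Phi t y) = fun y =>
      6 * y ^ 5 * Real.log t - 15 * (4 * y ^ 3) * t ^ 2 * (Real.log t - 2)
        + 5 * (2 * y) * t ^ 4 * (3 * Real.log t - 8) := by
    funext y; exact (hC t y).deriv
  rw [hev]
  exact (hD t x).deriv

lemma tauPhi {t : ℝ} (ht : t ≠ 0) (x : ℝ) : tauRH2 Phi t x = Psi t x := by
  simp only [tauRH2, derivA ht x, derivB ht x, derivD t x, B, Psi]
  field_simp
  ring

/-- t-derivatives of Psi -/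
lemma hPsi1 (t x : ℝ) :
    HasDerivAt (fun s => Psi s x) (30 * x ^ 4 * t - 60 * x ^ 2 * t ^ 3 + 6 * t ^ 5) t := by
  have h1 := (hasDerivAt_pow 2 t).const_mul (15 * x ^ 4)
  have h2 := (hasDerivAt_pow 4 t).const_mul (15 * x ^ 2)
  have h3 := hasDerivAt_pow 6 t
  have h := (((hasDerivAt_const t (-x ^ 6)).add h1).sub h2).add h3
  have hfun : (fun s => Psi s x) = fun s =>
      -x ^ 6 + 15 * x ^ 4 * s ^ 2 - 15 * x ^ 2 * s ^ 4 + s ^ 6 := by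
    funext s; simp only [Psi]
  rw [hfun]
  refine h.congr_deriv ?_
  push_cast; ring

lemma hPsi2 (t x : ℝ) :
    HasDerivAt (fun s => 30 * x ^ 4 * s - 60 * x ^ 2 * s ^ 3 + 6 * s ^ 5)
      (30 * x ^ 4 - 180 * x ^ 2 * t ^ 2 + 30 * t ^ 4) t := by
  have h1 := (hasDerivAt_id t).const_mul (30 * x ^ 4)
  have h2 := (hasDerivAt_pow 3 t).const_mul (60 * x ^ 2)
  have h3 := (hasDerivAt_pow 5 t).const_mul (6 : ℝ)
  have h := (h1.sub h2).add h3
  have hfun : (fun s : ℝ => 30 * x ^ 4 * s - 60 * x ^ 2 * s ^ 3 + 6 * s ^ 5)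
      = fun s => 30 * x ^ 4 * id s - 60 * x ^ 2 * s ^ 3 + 6 * s ^ 5 := by
    funext s; simp only [id_eq]
  rw [hfun]
  refine h.congr_deriv ?_
  push_cast; ring

lemma hPsi3 (t x : ℝ) :
    HasDerivAt (fun y => Psi t y) (-(6 * x ^ 5) + 60 * x ^ 3 * t ^ 2 - 30 * x * t ^ 4) x := by
  have h1 := hasDerivAt_pow 6 x
  have h2 := ((hasDerivAt_pow 4 x).const_mul (15 : ℝ)).mul_const (t ^ 2)
  have h3 := ((hasDerivAt_pow 2 x).const_mul (15 : ℝ)).mul_const (t ^ 4)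
  have h := (((h1.neg.add h2).sub h3).add_const (t ^ 6))
  have hfun : (fun y => Psi t y) = fun y =>
      -y ^ 6 + 15 * y ^ 4 * t ^ 2 - 15 * y ^ 2 * t ^ 4 + t ^ 6 := by
    funext y; simp only [Psi]
  rw [hfun]
  refine h.congr_deriv ?_
  push_cast; ring

lemma hPsi4 (t x : ℝ) :
    HasDerivAt (fun y => -(6 * y ^ 5) + 60 * y ^ 3 * t ^ 2 - 30 * y * t ^ 4)
      (-(30 * x ^ 4) + 180 * x ^ 2 * t ^ 2 - 30 * t ^ 4) x := by
  have h1 := (hasDerivAt_pow 5 x).const_mul (6 : ℝ)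
  have h2 := ((hasDerivAt_pow 3 x).const_mul (60 : ℝ)).mul_const (t ^ 2)
  have h3 := ((hasDerivAt_id x).const_mul (30 : ℝ)).mul_const (t ^ 4)
  have h := (h1.neg.add h2).sub h3
  have hfun : (fun y : ℝ => -(6 * y ^ 5) + 60 * y ^ 3 * t ^ 2 - 30 * y * t ^ 4)
      = fun y => -(6 * y ^ 5) + 60 * y ^ 3 * t ^ 2 - 30 * id y * t ^ 4 := by
    funext y; simp only [id_eq]
  rw [hfun]
  refine h.congr_deriv ?_
  push_cast; ring

lemma tauPsi (t x : ℝ) : tauRH2 Psi t x = 0 := by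
  have hd1 : deriv (fun s => Psi s x) = fun s =>
      30 * x ^ 4 * s - 60 * x ^ 2 * s ^ 3 + 6 * s ^ 5 := by
    funext s; exact (hPsi1 s x).deriv
  have hd3 : deriv (fun y => Psi t y) = fun y =>
      -(6 * y ^ 5) + 60 * y ^ 3 * t ^ 2 - 30 * y * t ^ 4 := by
    funext y; exact (hPsi3 t y).deriv
  simp only [tauRH2, hd1, hd3, (hPsi2 t x).deriv, (hPsi4 t x).deriv]
  ring

lemma tauTauPhi {t : ℝ} (ht : t ≠ 0) (x : ℝ) :
    tauRH2 (tauRH2 Phi) t x = 0 := by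
  have hev : (fun s => tauRH2 Phi s x) =ᶠ[nhds t] fun s => Psi s x := by
    filter_upwards [eventually_ne_nhds ht] with s hs using tauPhi hs x
  have hx : (fun y => tauRH2 Phi t y) = fun y => Psi t y := by
    funext y; exact tauPhi ht y
  rw [show tauRH2 (tauRH2 Phi) t x
      = t ^ 2 * deriv (deriv (fun s => tauRH2 Phi s x)) t
        + (1 - (1 : ℝ)) * t * deriv (fun s => tauRH2 Phi s x) t
        + t ^ 2 * deriv (deriv (fun y => tauRH2 Phi t y)) x from rfl,
    hev.deriv_eq, (hev.deriv).deriv_eq, hx]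
  exact tauPsi t x

/-- the displayed function is proper biharmonic on `ℝH²`. -/
theorem stmt_1 :
    letI φ : ℝ → ℝ → ℝ := fun t x =>
      x ^ 6 * Real.log t - 15 * x ^ 4 * t ^ 2 * (Real.log t - 2)
        + 5 * x ^ 2 * t ^ 4 * (3 * Real.log t - 8)
        - t ^ 6 / 15 * (15 * Real.log t - 46)
    (∀ t > (0 : ℝ), ∀ x : ℝ, tauRH2 (tauRH2 φ) t x = 0) ∧
      (∃ t > (0 : ℝ), ∃ x : ℝ, tauRH2 φ t x ≠ 0) := by
  refine ⟨fun t ht x => tauTauPhi (ne_of_gt ht) x, 1, one_pos, 0, ?_⟩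
  have h := tauPhi (t := 1) one_ne_zero 0
  rw [show ((fun t x =>
      x ^ 6 * Real.log t - 15 * x ^ 4 * t ^ 2 * (Real.log t - 2)
        + 5 * x ^ 2 * t ^ 4 * (3 * Real.log t - 8)
        - t ^ 6 / 15 * (15 * Real.log t - 46) : ℝ → ℝ → ℝ)) = Phi from rfl, h]
  norm_num [Psi]
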